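/- arXiv:1311.6086 — 2 statements merged into one kernel-verified Lean document; each statement's English description precedes it below -/
import Mathlib

section
/- Let G be a group, n ≥ 1, and N the normal subgroup of G^n ⋊ Sₙ generated by the canonical copy of Sₙ. Then for all g₁,...,gₙ ∈ G and σ ∈ Sₙ, the element (g₁,...,gₙ,σ) is congruent modulo N to (g₁g₂⋯gₙ, 1, ..., 1, σ). -/
open SemidirectProduct

/-- The permutation action of `Sₙ` on `Gⁿ`: `σ • g = g ∘ σ⁻¹`. -/
def permHom (G : Type*) [Group G] (n : ℕ) :
    Equiv.Perm (Fin n) →* MulAut (Fin n → G) where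
  toFun σ := MulEquiv.arrowCongr σ (MulEquiv.refl G)
  map_one' := by ext f i; rfl
  map_mul' σ τ := by ext f i; rfl

/-- The semidirect product `Gⁿ ⋊ Sₙ` for the permutation action. -/
abbrev SDP (G : Type*) [Group G] (n : ℕ) :=
  (Fin n → G) ⋊[permHom G n] Equiv.Perm (Fin n)

/-- The normal closure of the canonical copy of `Sₙ` inside `Gⁿ ⋊ Sₙ`. -/
def Ncl (G : Type*) [Group G] (n : ℕ) : Subgroup (SDP G n) :=
  Subgroup.normalClosure
    (Set.range (SemidirectProduct.inr (φ := permHom G n)))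

instance (G : Type*) [Group G] (n : ℕ) : (Ncl G n).Normal :=
  Subgroup.normalClosure_normal

private lemma spike_prod {M : Type*} [Monoid M] :
    ∀ (n : ℕ) (j : Fin n) (x : M),
      (List.ofFn fun i => if j = i then x else 1).prod = x
  | 0, j, _ => j.elim0
  | n + 1, j, x => by
    induction j using Fin.cases with
    | zero => simp [List.ofFn_succ, (Fin.succ_ne_zero _).symm]
    | succ k =>
      rw [List.ofFn_succ]
      simp only [if_neg (Fin.succ_ne_zero k), Fin.succ_inj,
        List.prod_cons, one_mul, Function.comp]
      exact spike_prod n k x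

private lemma prod_mulSingle {M : Type*} [Monoid M] {n : ℕ} (f : Fin n → M) :
    (List.ofFn fun i => Pi.mulSingle i (f i)).prod = f := by
  funext j
  have h1 := (Pi.evalMonoidHom (fun _ : Fin n => M) j).map_list_prod
    (List.ofFn fun i => Pi.mulSingle i (f i))
  simp only [Pi.evalMonoidHom_apply] at h1
  rw [h1, List.map_ofFn]
  have h2 : (⇑(Pi.evalMonoidHom (fun _ : Fin n => M) j) ∘ fun i => Pi.mulSingle i (f i))
      = fun i => if j = i then f j else 1 := by
    funext i
    simp only [Function.comp_apply, Pi.evalMonoidHom_apply, Pi.mulSingle_apply]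
    by_cases h : j = i
    · subst h; simp
    · simp [h]
  rw [h2, spike_prod]

theorem collect_product_mod_N (G : Type*) [Group G] (n : ℕ) (hn : 1 ≤ n)
    (g : Fin n → G) (σ : Equiv.Perm (Fin n)) :
    ((⟨g, σ⟩ : SDP G n) : SDP G n ⧸ Ncl G n) =
      ((⟨fun i => if i = (⟨0, hn⟩ : Fin n) then (List.ofFn g).prod else 1, σ⟩ :
          SDP G n) : SDP G n ⧸ Ncl G n) := by
  set z : Fin n := ⟨0, hn⟩
  set π : SDP G n →* SDP G n ⧸ Ncl G n := QuotientGroup.mk' (Ncl G n) with hπ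
  have hinr : ∀ τ : Equiv.Perm (Fin n), π (inr τ) = 1 := fun τ =>
    (QuotientGroup.eq_one_iff _).2 (Subgroup.subset_normalClosure ⟨τ, rfl⟩)
  have hmk : ∀ (f : Fin n → G) (τ : Equiv.Perm (Fin n)),
      (⟨f, τ⟩ : SDP G n) = inl f * inr τ := by
    intro f τ
    ext <;> simp
  have haut : ∀ (τ : Equiv.Perm (Fin n)) (f : Fin n → G),
      π (inl ((permHom G n τ) f)) = π (inl f) := by
    intro τ f
    rw [inl_aut]
    simp [hinr]
  have hsingle : ∀ (i : Fin n) (x : G),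
      π (inl (Pi.mulSingle i x)) = π (inl (Pi.mulSingle z x)) := by
    intro i x
    have key : (permHom G n (Equiv.swap z i)) (Pi.mulSingle z x) = Pi.mulSingle i x := by
      funext j
      have hperm : ((permHom G n (Equiv.swap z i)) (Pi.mulSingle z x)) j
          = (Pi.mulSingle z x : Fin n → G) (Equiv.swap z i j) := by
        simp [permHom, MulEquiv.arrowCongr]
      rw [hperm, Pi.mulSingle_apply, Pi.mulSingle_apply]
      congr 1
      rw [Equiv.apply_eq_iff_eq_symm_apply, Equiv.symm_swap, Equiv.swap_apply_left]
    rw [← key, haut]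
  show π ⟨g, σ⟩ = π ⟨_, σ⟩
  rw [hmk, hmk, map_mul, map_mul]
  congr 1
  have hfun : (fun i => if i = z then (List.ofFn g).prod else 1)
      = Pi.mulSingle z (List.ofFn g).prod := by
    funext j; rw [Pi.mulSingle_apply]
  rw [hfun]
  have hcomp := (π.comp (inl (φ := permHom G n))).map_list_prod
  calc π (inl g)
      = π (inl (List.ofFn fun i => Pi.mulSingle i (g i)).prod) := by
        rw [prod_mulSingle]
    _ = (List.ofFn fun i => π (inl (Pi.mulSingle i (g i)))).prod := by
        rw [← MonoidHom.comp_apply, hcomp, List.map_ofFn]; rfl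
    _ = (List.ofFn fun i => π (inl (Pi.mulSingle z (g i)))).prod := by
        simp only [hsingle]
    _ = π (inl (List.ofFn fun i => Pi.mulSingle z (g i)).prod) := by
        rw [← MonoidHom.comp_apply, hcomp, List.map_ofFn]; rfl
    _ = π (inl (Pi.mulSingle z (List.ofFn g).prod)) := by
        have h3 : (Pi.mulSingle z (List.ofFn g).prod : Fin n → G)
            = (List.ofFn fun i => Pi.mulSingle z (g i)).prod := by
          rw [show (Pi.mulSingle z (List.ofFn g).prod : Fin n → G)
              = MonoidHom.mulSingle (fun _ : Fin n => G) z (List.ofFn g).prod from rfl,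
            map_list_prod, List.map_ofFn]
          rfl
        rw [h3]
end

section
/- Let G be a group and n ≥ 2. Every element of the canonical copy of G^n in G^n ⋊ Sₙ is congruent modulo N (the normal closure of Sₙ) to an element of the form (g,1,...,1, id) with g ∈ G, and two such elements (g,1,...,1,id) and (h,1,...,1,id) are congruent modulo N if and only if g⁻¹h ∈ [G,G]. -/
open SemidirectProduct

section Aux

variable {G : Type*} [Group G] {n : ℕ}

lemma permHom_mulSingle (σ : Equiv.Perm (Fin n)) (i : Fin n) (a : G) :
    permHom G n σ (Pi.mulSingle i a) = Pi.mulSingle (σ i) a := by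
  funext j
  have : permHom G n σ (Pi.mulSingle i a) j
      = (Pi.mulSingle i a : Fin n → G) (σ.symm j) := rfl
  rw [this, Pi.mulSingle_apply, Pi.mulSingle_apply]
  simp only [Equiv.symm_apply_eq]

lemma inr_mem_Ncl (σ : Equiv.Perm (Fin n)) :
    (⟨1, σ⟩ : SDP G n) ∈ Ncl G n :=
  Subgroup.subset_normalClosure ⟨σ, rfl⟩

lemma mk_inr (σ : Equiv.Perm (Fin n)) :
    ((⟨1, σ⟩ : SDP G n) : SDP G n ⧸ Ncl G n) = 1 :=
  (QuotientGroup.eq_one_iff _).mpr (inr_mem_Ncl σ)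

/-- Conjugation by a permutation does not change the class mod `N`. -/
lemma mk_perm (σ : Equiv.Perm (Fin n)) (g : Fin n → G) :
    ((⟨permHom G n σ g, 1⟩ : SDP G n) : SDP G n ⧸ Ncl G n)
      = ((⟨g, 1⟩ : SDP G n) : SDP G n ⧸ Ncl G n) := by
  have h : (⟨1, σ⟩ * ⟨g, 1⟩ * ⟨1, σ⁻¹⟩ : SDP G n)
      = ⟨permHom G n σ g, 1⟩ := by
    rw [SemidirectProduct.mul_def, SemidirectProduct.mul_def]
    congr 1
    · rw [one_mul, mul_one, map_one, mul_one]
    · rw [mul_one, mul_inv_cancel]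
  rw [← h, QuotientGroup.mk_mul, QuotientGroup.mk_mul, mk_inr, mk_inr]
  group

/-- The class of the element of `Gⁿ ⋊ Sₙ ⧸ N` with `a` in coordinate `i`. -/
def psi (i : Fin n) : G →* SDP G n ⧸ Ncl G n :=
  (QuotientGroup.mk' (Ncl G n)).comp
    ((SemidirectProduct.inl (φ := permHom G n)).comp
      (MonoidHom.mulSingle (fun _ : Fin n => G) i))

lemma psi_apply (i : Fin n) (a : G) :
    psi i a = ((⟨Pi.mulSingle i a, 1⟩ : SDP G n) : SDP G n ⧸ Ncl G n) := rfl

lemma psi_indep (i j : Fin n) (a : G) : psi (G := G) i a = psi j a := by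
  rw [psi_apply, psi_apply, ← mk_perm (Equiv.swap i j) (Pi.mulSingle i a),
    permHom_mulSingle, Equiv.swap_apply_left]

lemma list_single_prod (g : Fin n → G) (j : Fin n) :
    ∀ l : List (Fin n), l.Nodup → j ∈ l →
      (l.map fun i => Pi.mulSingle i (g i) j).prod = g j := by
  intro l
  induction l with
  | nil => intro _ h; simp at h
  | cons i t ih =>
    intro hnd hj
    rw [List.map_cons, List.prod_cons]
    rcases eq_or_ne j i with rfl | hji
    · have ht : (t.map fun i => Pi.mulSingle i (g i) j).prod = 1 := by
        apply List.prod_eq_one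
        intro x hx
        rcases List.mem_map.mp hx with ⟨k, hk, rfl⟩
        have : j ≠ k := fun h => (List.nodup_cons.mp hnd).1 (h ▸ hk)
        simp [Pi.mulSingle_apply, this]
      rw [ht, mul_one, Pi.mulSingle_apply, if_pos rfl]
    · have hjt : j ∈ t := by
        rcases List.mem_cons.mp hj with h | h
        · exact absurd h hji
        · exact h
      rw [Pi.mulSingle_apply, if_neg hji, one_mul,
        ih (List.nodup_cons.mp hnd).2 hjt]

lemma pi_eq_prod_mulSingle (g : Fin n → G) :
    g = ((List.finRange n).map fun i => Pi.mulSingle i (g i)).prod := by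
  funext j
  have := map_list_prod (Pi.evalMonoidHom (fun _ : Fin n => G) j)
    ((List.finRange n).map fun i => Pi.mulSingle i (g i))
  simp only [Pi.evalMonoidHom_apply, List.map_map, Function.comp_def] at this
  rw [this, list_single_prod g j _ (List.nodup_finRange n) (List.mem_finRange j)]

/-- Every `(g, 1)` is congruent mod `N` to a single-coordinate element. -/
lemma mk_eq_psi_prod (i : Fin n) (g : Fin n → G) :
    ((⟨g, 1⟩ : SDP G n) : SDP G n ⧸ Ncl G n)
      = psi i (((List.finRange n).map g).prod) := by
  have hmk : ∀ a : Fin n → G,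
      ((⟨a, 1⟩ : SDP G n) : SDP G n ⧸ Ncl G n)
        = (QuotientGroup.mk' (Ncl G n)).comp
            (SemidirectProduct.inl (φ := permHom G n)) a := fun _ => rfl
  have hR : psi (G := G) i (((List.finRange n).map g).prod)
      = ((List.finRange n).map fun k => psi i (g k)).prod := by
    rw [map_list_prod, List.map_map]
    simp only [Function.comp_def]
  have hL : ((⟨g, 1⟩ : SDP G n) : SDP G n ⧸ Ncl G n)
      = ((List.finRange n).map fun k =>
          ((⟨Pi.mulSingle k (g k), 1⟩ : SDP G n) : SDP G n ⧸ Ncl G n)).prod := by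
    rw [hmk]
    conv_lhs => rw [pi_eq_prod_mulSingle g]
    rw [map_list_prod, List.map_map]
    simp only [Function.comp_def]
    rfl
  rw [hL, hR]
  exact congrArg List.prod (List.map_congr_left fun k _ => by
    rw [← psi_apply, psi_indep k i])

lemma psi_commute (hn : 2 ≤ n) (i : Fin n) (a b : G) :
    psi (G := G) i a * psi i b = psi i b * psi i a := by
  have h01 : (⟨0, by omega⟩ : Fin n) ≠ ⟨1, by omega⟩ := by
    intro h
    simpa using congrArg Fin.val h
  have key : ∀ x y : G, psi (G := G) (⟨0, by omega⟩ : Fin n) x *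
      psi (⟨1, by omega⟩ : Fin n) y
        = psi (⟨1, by omega⟩ : Fin n) y * psi (⟨0, by omega⟩ : Fin n) x := by
    intro x y
    rw [psi_apply, psi_apply, ← QuotientGroup.mk_mul, ← QuotientGroup.mk_mul]
    congr 1
    have hc := Pi.mulSingle_commute (f := fun _ : Fin n => G) h01 x y
    rw [SemidirectProduct.mul_def, SemidirectProduct.mul_def]
    refine SemidirectProduct.ext ?_ rfl
    show Pi.mulSingle _ x * permHom G n 1 (Pi.mulSingle _ y)
      = Pi.mulSingle _ y * permHom G n 1 (Pi.mulSingle _ x)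
    simp only [map_one, MulAut.one_apply]
    exact hc.eq
  calc psi i a * psi i b
      = psi (⟨0, by omega⟩ : Fin n) a * psi (⟨1, by omega⟩ : Fin n) b := by
        rw [psi_indep i ⟨0, by omega⟩ a, psi_indep i ⟨1, by omega⟩ b]
    _ = psi (⟨1, by omega⟩ : Fin n) b * psi (⟨0, by omega⟩ : Fin n) a := key a b
    _ = psi i b * psi i a := by
        rw [psi_indep ⟨0, by omega⟩ i a, psi_indep ⟨1, by omega⟩ i b]

lemma commutator_le_ker_psi (hn : 2 ≤ n) (i : Fin n) :
    commutator G ≤ (psi (G := G) (n := n) i).ker := by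
  rw [commutator, Subgroup.commutator_le]
  intro a _ b _
  rw [MonoidHom.mem_ker, map_commutatorElement,
    commutatorElement_eq_one_iff_commute]
  exact psi_commute hn i a b

/-- The product-of-coordinates homomorphism to the abelianization. -/
def phi (G : Type*) [Group G] (n : ℕ) : SDP G n →* Abelianization G where
  toFun x := ∏ i, Abelianization.of (x.left i)
  map_one' := by simp
  map_mul' x y := by
    show (∏ i, Abelianization.of ((x * y).left i)) =
      (∏ i, Abelianization.of (x.left i)) * ∏ i, Abelianization.of (y.left i)
    have h : ∀ i, (x * y).left i = x.left i * y.left (x.right.symm i) :=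
      fun _ => rfl
    simp only [h, map_mul, Finset.prod_mul_distrib]
    congr 1
    exact Equiv.prod_comp x.right.symm fun i => Abelianization.of (y.left i)

lemma Ncl_le_ker_phi : Ncl G n ≤ (phi G n).ker := by
  apply Subgroup.normalClosure_le_normal
  rintro x ⟨σ, rfl⟩
  rw [SetLike.mem_coe, MonoidHom.mem_ker]
  show (∏ i, Abelianization.of ((1 : Fin n → G) i)) = 1
  simp

lemma phi_single (i : Fin n) (a : G) :
    phi G n (⟨Pi.mulSingle i a, 1⟩ : SDP G n) = Abelianization.of a := by
  show (∏ j, Abelianization.of (Pi.mulSingle i a j)) = Abelianization.of a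
  rw [Finset.prod_eq_single i]
  · simp
  · intro b _ hb
    simp [Pi.mulSingle_apply, hb]
  · simp

end Aux

theorem mod_N_classification (G : Type*) [Group G] (n : ℕ) (hn : 2 ≤ n) :
    (∀ g : Fin n → G, ∃ g0 : G,
        ((⟨g, 1⟩ : SDP G n) : SDP G n ⧸ Ncl G n) =
          ((⟨fun i => if i = (⟨0, by omega⟩ : Fin n) then g0 else 1, 1⟩ :
              SDP G n) : SDP G n ⧸ Ncl G n)) ∧
    (∀ g h : G,
        ((⟨fun i => if i = (⟨0, by omega⟩ : Fin n) then g else 1, 1⟩ :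
            SDP G n) : SDP G n ⧸ Ncl G n) =
          ((⟨fun i => if i = (⟨0, by omega⟩ : Fin n) then h else 1, 1⟩ :
              SDP G n) : SDP G n ⧸ Ncl G n) ↔ g⁻¹ * h ∈ commutator G) := by
  set i0 : Fin n := ⟨0, by omega⟩ with hi0
  have hsingle : ∀ a : G,
      (fun i => if i = i0 then a else 1) = Pi.mulSingle i0 a := by
    intro a; funext j; rw [Pi.mulSingle_apply]
  constructor
  · intro g
    refine ⟨((List.finRange n).map g).prod, ?_⟩
    rw [hsingle, ← psi_apply, mk_eq_psi_prod i0 g]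
  · intro g h
    constructor
    · intro hgh
      rw [hsingle, hsingle] at hgh
      have h1 : phi G n (⟨Pi.mulSingle i0 g, 1⟩ : SDP G n)
          = phi G n (⟨Pi.mulSingle i0 h, 1⟩ : SDP G n) := by
        have := (QuotientGroup.eq (s := Ncl G n)).mp hgh
        have hker := Ncl_le_ker_phi this
        rw [MonoidHom.mem_ker, map_mul, map_inv, inv_mul_eq_one] at hker
        exact hker
      rw [phi_single, phi_single] at h1
      have : ((g : G ⧸ commutator G)) = (h : G ⧸ commutator G) := h1
      exact (QuotientGroup.eq (s := commutator G)).mp this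
    · intro hgh
      rw [hsingle, hsingle, ← psi_apply, ← psi_apply]
      have hk : psi (G := G) i0 (g⁻¹ * h) = 1 := commutator_le_ker_psi hn i0 hgh
      calc psi (G := G) i0 g = psi i0 g * psi i0 (g⁻¹ * h) := by rw [hk, mul_one]
        _ = psi i0 h := by rw [← map_mul]; group
end
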